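/- An open graph (G, I, O) has a focused gflow if and only if there exists a directed acyclic graph F on the vertex set V(G) such that the product of induced adjacency matrices over F₂ satisfies A_G|_{Iᶜ}^{Oᶜ} · A_F|_{Oᶜ}^{Iᶜ} = Identity, where A_G|_{Iᶜ}^{Oᶜ} is the submatrix of the adjacency matrix of G with rows indexed by Oᶜ and columns by Iᶜ, and A_F|_{Oᶜ}^{Iᶜ} is the submatrix of the adjacency matrix of F with rows indexed by Iᶜ and columns by Oᶜ. -/

import Mathlib

open scoped Classical
noncomputable section

variable {V : Type*} [Fintype V] [DecidableEq V]

/-- Odd neighborhood: vertices with an odd number of neighbors in `S`. -/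
def oddNbhd (G : SimpleGraph V) (S : Finset V) : Finset V :=
  Finset.univ.filter fun v => Odd (S.filter (G.Adj v)).card

/-- `(g, r)` is a gflow of the open graph `(G, I, O)`. -/
def IsGflow (G : SimpleGraph V) (I O : Finset V)
    (g : V → Finset V) (r : V → V → Prop) : Prop :=
  IsStrictOrder V r ∧
  ∀ u ∉ O,
    g u ⊆ Iᶜ ∧
    (∀ v ∈ g u, r u v) ∧
    u ∈ oddNbhd G (g u) ∧
    (∀ v ∈ oddNbhd G (g u), v ≠ u → r u v)

def HasGflow (G : SimpleGraph V) (I O : Finset V) : Prop :=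
  ∃ g r, IsGflow G I O g r

/-- `g` is a focused gflow of the open graph `(G, I, O)`. -/
def IsFocusedGflow (G : SimpleGraph V) (I O : Finset V) (g : V → Finset V) : Prop :=
  (∀ u, ¬ Relation.TransGen (fun a b => a ∉ O ∧ b ∈ g a) u u) ∧
  ∀ u ∉ O, g u ⊆ Iᶜ ∧ oddNbhd G (g u) ∩ Oᶜ = {u}

lemma castTwo (n : ℕ) : ((n : ZMod 2)) = if Odd n then 1 else 0 := by
  rcases Nat.even_or_odd n with h | h
  · simp [Nat.not_odd_iff_even.mpr h,
      (ZMod.natCast_eq_zero_iff n 2).mpr h.two_dvd]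
  · simp only [h, if_true]
    obtain ⟨k, rfl⟩ := h
    push_cast
    have : (2 : ZMod 2) = 0 := by decide
    rw [this]; ring

lemma sum_entry (G : SimpleGraph V) (I : Finset V) (S : Finset V) (hS : ∀ v ∈ S, v ∉ I) (u : V) :
    (∑ v : {v // v ∉ I}, (if G.Adj u v.1 then (1 : ZMod 2) else 0) *
        (if v.1 ∈ S then (1 : ZMod 2) else 0))
      = ((S.filter (G.Adj u)).card : ZMod 2) := by
  have h1 : ∀ v : {v // v ∉ I},
      (if G.Adj u v.1 then (1 : ZMod 2) else 0) * (if v.1 ∈ S then (1 : ZMod 2) else 0)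
        = if v.1 ∈ S ∧ G.Adj u v.1 then 1 else 0 := by
    intro v; by_cases h : G.Adj u v.1 <;> by_cases h' : v.1 ∈ S <;> simp [h, h']
  rw [Finset.sum_congr rfl fun v _ => h1 v]
  rw [← Finset.sum_subtype (Iᶜ) (fun x => Finset.mem_compl)
    (fun v => if v ∈ S ∧ G.Adj u v then (1 : ZMod 2) else 0)]
  rw [Finset.sum_boole]
  congr 2
  ext v
  simp only [Finset.mem_filter, Finset.mem_compl]
  constructor
  · rintro ⟨_, h1, h2⟩; exact ⟨h1, h2⟩
  · rintro ⟨h1, h2⟩; exact ⟨hS v h1, h1, h2⟩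

theorem focusedGflow_iff_dag_right_inverse (G : SimpleGraph V) (I O : Finset V) :
    (∃ g, IsFocusedGflow G I O g) ↔
      ∃ F : V → V → Bool,
        (∀ u, ¬ Relation.TransGen (fun a b => F a b = true) u u) ∧
        (Matrix.of fun (u : {v // v ∉ O}) (w : {v // v ∉ I}) =>
            if G.Adj u.1 w.1 then (1 : ZMod 2) else 0) *
          (Matrix.of fun (u : {v // v ∉ I}) (w : {v // v ∉ O}) =>
            if F u.1 w.1 then (1 : ZMod 2) else 0) = 1 := by
  constructor
  · rintro ⟨g, hacyc, hg⟩
    refine ⟨fun v w => decide (w ∉ O ∧ v ∈ g w), ?_, ?_⟩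
    · intro u hu
      refine hacyc u ?_
      rw [← Relation.transGen_swap]
      refine Relation.TransGen.mono ?_ u u hu
      intro a b hab
      simpa [Function.swap] using of_decide_eq_true hab
    · ext ⟨u, hu⟩ ⟨w, hw⟩
      rw [Matrix.mul_apply]
      simp only [Matrix.of_apply]
      have hFe : ∀ v : {v // v ∉ I},
          (if decide (w ∉ O ∧ v.1 ∈ g w) = true then (1 : ZMod 2) else 0)
            = if v.1 ∈ g w then 1 else 0 := by
        intro v; simp [hw]
      rw [Finset.sum_congr rfl fun v _ => by rw [hFe v]]
      have hsub : ∀ v ∈ g w, v ∉ I := by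
        intro v hv
        have := (hg w hw).1 hv
        simpa using this
      rw [sum_entry G I (g w) hsub u, castTwo]
      have hodd : Odd ((g w).filter (G.Adj u)).card ↔ u = w := by
        have hfoc := (hg w hw).2
        constructor
        · intro h
          have : u ∈ oddNbhd G (g w) ∩ Oᶜ := by
            simp [oddNbhd, Finset.mem_inter, Finset.mem_filter, h, hu]
          rw [hfoc] at this
          simpa using this
        · rintro rfl
          have : u ∈ oddNbhd G (g u) ∩ Oᶜ := by rw [hfoc]; simp
          simp only [oddNbhd, Finset.mem_inter, Finset.mem_filter] at this
          exact this.1.2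
      rw [Matrix.one_apply]
      have hse : ((⟨u, hu⟩ : {v // v ∉ O}) = ⟨w, hw⟩) ↔ u = w := Subtype.ext_iff
      by_cases h : u = w
      · subst h
        simp [hodd.mpr rfl]
      · simp [hse, h, hodd]
  · rintro ⟨F, hacyc, hmat⟩
    set g : V → Finset V := fun w => Finset.univ.filter (fun v => v ∉ I ∧ F v w = true) with hgdef
    have hgmem : ∀ v w, v ∈ g w ↔ v ∉ I ∧ F v w = true := by
      intro v w; simp [hgdef]
    refine ⟨g, ?_, ?_⟩
    · intro u hu
      refine hacyc u ?_
      rw [← Relation.transGen_swap]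
      refine Relation.TransGen.mono ?_ u u hu
      intro a b hab
      exact ((hgmem b a).mp hab.2).2
    · intro u hu
      constructor
      · intro v hv
        simp only [Finset.mem_compl]
        exact ((hgmem v u).mp hv).1
      · have key : ∀ w (hw : w ∉ O), (Odd ((g u).filter (G.Adj w)).card ↔ w = u) := by
          intro w hw
          have := congrFun (congrFun hmat ⟨w, hw⟩) ⟨u, hu⟩
          rw [Matrix.mul_apply, Matrix.one_apply] at this
          simp only [Matrix.of_apply] at this
          have hFe : ∀ v : {v // v ∉ I},
              (if F v.1 u = true then (1 : ZMod 2) else 0) = if v.1 ∈ g u then 1 else 0 := by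
            intro v
            have : v.1 ∈ g u ↔ F v.1 u = true := by
              rw [hgmem]; simp [v.2]
            simp [this]
          rw [Finset.sum_congr rfl fun v _ => by rw [hFe v]] at this
          have hsub : ∀ v ∈ g u, v ∉ I := fun v hv => ((hgmem v u).mp hv).1
          rw [sum_entry G I (g u) hsub w, castTwo] at this
          have this2 : (if Odd ((g u).filter (G.Adj w)).card then (1 : ZMod 2) else 0)
              = if w = u then 1 else 0 := by
            simpa [Subtype.ext_iff] using this
          constructor
          · intro h
            by_contra hne
            rw [if_pos h, if_neg hne] at this2
            exact one_ne_zero this2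
          · intro h
            by_contra hodd'
            rw [if_neg hodd', if_pos h] at this2
            exact one_ne_zero this2.symm
        ext w
        simp only [oddNbhd, Finset.mem_inter, Finset.mem_filter, Finset.mem_univ, true_and,
          Finset.mem_compl, Finset.mem_singleton]
        constructor
        · rintro ⟨h1, h2⟩
          exact (key w h2).mp h1
        · rintro rfl
          exact ⟨(key w hu).mpr rfl, hu⟩
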